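/- Let f : ℝ → ℝ belong to the Newton class and suppose the limits of f at +∞ and −∞ are infinite and of opposite signs. Let c₁ < c₂ be two consecutive roots of f′ (i.e. f′(c₁) = f′(c₂) = 0 and f′(x) ≠ 0 for x ∈ (c₁, c₂)) such that f has exactly one root in (c₁, c₂). Then the one-sided limits of M_f at c₁ from the right and at c₂ from the left are infinite and of opposite signs: either lim_{x→c₁+} M_f(x) = +∞ and lim_{x→c₂−} M_f(x) = −∞, or lim_{x→c₁+} M_f(x) = −∞ and lim_{x→c₂−} M_f(x) = +∞. -/

import Mathlib

/-- `f` belongs to the Newton class: `f` is twice continuously differentiable,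
roots of `f` are simple, and roots of `f'` are simple. -/
def NewtonClass (f : ℝ → ℝ) : Prop :=
  ContDiff ℝ 2 f ∧ (∀ x, f x = 0 → deriv f x ≠ 0) ∧
    (∀ x, deriv f x = 0 → deriv (deriv f) x ≠ 0)

/-- The classical Newton approximation function `N_f(x) = x - f(x)/f'(x)`. -/
noncomputable def newtonFun (f : ℝ → ℝ) (x : ℝ) : ℝ :=
  x - f x / deriv f x

/-- The modified Newton approximation function
`M_f(x) = N_f(x) - f(N_f(x))/f'(x)`. -/
noncomputable def modNewtonFun (f : ℝ → ℝ) (x : ℝ) : ℝ :=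
  newtonFun f x - f (newtonFun f x) / deriv f x

open Filter Set

/-- `M` is invariant under negating `f`. -/
lemma modNewton_neg (f : ℝ → ℝ) : modNewtonFun (fun x => -f x) = modNewtonFun f := by
  have hd : deriv (fun x => -f x) = fun x => -deriv f x := by
    funext x; exact deriv.neg
  have hN : newtonFun (fun x => -f x) = newtonFun f := by
    funext x; simp [newtonFun, hd, neg_div_neg_eq]
  funext x
  simp [modNewtonFun, hN, hd, neg_div_neg_eq]

lemma modNewton_eq (f : ℝ → ℝ) (x : ℝ) :
    modNewtonFun f x = x + -((f x + f (newtonFun f x)) * (deriv f x)⁻¹) := by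
  simp only [modNewtonFun, newtonFun, div_eq_mul_inv]
  ring

/-- The main computation, in the case where `f'` is positive between the two
consecutive critical points. -/
lemma modNewton_main_pos (f : ℝ → ℝ) (hC : Continuous f) (hC' : Continuous (deriv f))
    (hlim : (Tendsto f atTop atTop ∧ Tendsto f atBot atBot) ∨
            (Tendsto f atTop atBot ∧ Tendsto f atBot atTop))
    (c₁ c₂ r : ℝ) (hlt : c₁ < c₂)
    (hc₁ : deriv f c₁ = 0) (hc₂ : deriv f c₂ = 0)
    (hpos : ∀ x ∈ Set.Ioo c₁ c₂, 0 < deriv f x)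
    (hr : r ∈ Set.Ioo c₁ c₂) (hfr : f r = 0) :
    (Tendsto (modNewtonFun f) (nhdsWithin c₁ (Set.Ioi c₁)) atTop ∧
       Tendsto (modNewtonFun f) (nhdsWithin c₂ (Set.Iio c₂)) atBot) ∨
    (Tendsto (modNewtonFun f) (nhdsWithin c₁ (Set.Ioi c₁)) atBot ∧
       Tendsto (modNewtonFun f) (nhdsWithin c₂ (Set.Iio c₂)) atTop) := by
  set l₁ := nhdsWithin c₁ (Set.Ioi c₁) with hl₁
  set l₂ := nhdsWithin c₂ (Set.Iio c₂) with hl₂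
  have hid₁ : Tendsto (fun x : ℝ => x) l₁ (nhds c₁) := tendsto_id.mono_left nhdsWithin_le_nhds
  have hid₂ : Tendsto (fun x : ℝ => x) l₂ (nhds c₂) := tendsto_id.mono_left nhdsWithin_le_nhds
  have hf₁ : Tendsto f l₁ (nhds (f c₁)) := (hC.tendsto c₁).mono_left nhdsWithin_le_nhds
  have hf₂ : Tendsto f l₂ (nhds (f c₂)) := (hC.tendsto c₂).mono_left nhdsWithin_le_nhds
  -- membership of Ioo eventually
  have hIoo₁ : ∀ᶠ x in l₁, x ∈ Set.Ioo c₁ c₂ := by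
    filter_upwards [Ioo_mem_nhdsGT_of_mem ⟨le_refl _, hlt⟩] with x hx using hx
  have hIoo₂ : ∀ᶠ x in l₂, x ∈ Set.Ioo c₁ c₂ := by
    filter_upwards [Ioo_mem_nhdsLT_of_mem ⟨hlt, le_refl _⟩] with x hx using hx
  -- deriv tends to 0 from above
  have hd₁ : Tendsto (deriv f) l₁ (nhdsWithin 0 (Set.Ioi 0)) := by
    rw [tendsto_nhdsWithin_iff]
    refine ⟨hc₁ ▸ (hC'.tendsto c₁).mono_left nhdsWithin_le_nhds, ?_⟩
    exact hIoo₁.mono fun x hx => hpos x hx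
  have hd₂ : Tendsto (deriv f) l₂ (nhdsWithin 0 (Set.Ioi 0)) := by
    rw [tendsto_nhdsWithin_iff]
    refine ⟨hc₂ ▸ (hC'.tendsto c₂).mono_left nhdsWithin_le_nhds, ?_⟩
    exact hIoo₂.mono fun x hx => hpos x hx
  have hinv₁ : Tendsto (fun x => (deriv f x)⁻¹) l₁ atTop := hd₁.inv_tendsto_nhdsGT_zero
  have hinv₂ : Tendsto (fun x => (deriv f x)⁻¹) l₂ atTop := hd₂.inv_tendsto_nhdsGT_zero
  -- strict monotonicity and endpoint signs
  have hsm : StrictMonoOn f (Set.Icc c₁ c₂) := by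
    apply strictMonoOn_of_deriv_pos (convex_Icc c₁ c₂) hC.continuousOn
    intro x hx
    rw [interior_Icc] at hx
    exact hpos x hx
  have hfc₁ : f c₁ < 0 := by
    have := hsm (Set.left_mem_Icc.2 hlt.le) ⟨hr.1.le, hr.2.le⟩ hr.1
    linarith [hfr]
  have hfc₂ : 0 < f c₂ := by
    have := hsm ⟨hr.1.le, hr.2.le⟩ (Set.right_mem_Icc.2 hlt.le) hr.2
    linarith [hfr]
  -- Newton function limits
  have hNeq : ∀ x, newtonFun f x = x + (-f x) * (deriv f x)⁻¹ := by
    intro x; simp only [newtonFun, div_eq_mul_inv]; ring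
  have hN₁ : Tendsto (newtonFun f) l₁ atTop := by
    have h1 : Tendsto (fun x => (-f x) * (deriv f x)⁻¹) l₁ atTop :=
      Tendsto.pos_mul_atTop (by linarith : (0:ℝ) < -f c₁) hf₁.neg hinv₁
    have := hid₁.add_atTop h1
    simpa only [← hNeq] using this
  have hN₂ : Tendsto (newtonFun f) l₂ atBot := by
    have h1 : Tendsto (fun x => (-f x) * (deriv f x)⁻¹) l₂ atBot :=
      Tendsto.neg_mul_atTop (by linarith : -f c₂ < 0) hf₂.neg hinv₂
    have := hid₂.add_atBot h1
    simpa only [← hNeq] using this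
  rcases hlim with ⟨htop, hbot⟩ | ⟨htop, hbot⟩
  · -- f → +∞ at +∞ : M → atBot at c₁⁺, atTop at c₂⁻
    right
    constructor
    · have hnum : Tendsto (fun x => f x + f (newtonFun f x)) l₁ atTop :=
        hf₁.add_atTop (htop.comp hN₁)
      have hq : Tendsto (fun x => (f x + f (newtonFun f x)) * (deriv f x)⁻¹) l₁ atTop :=
        hnum.atTop_mul_atTop₀ hinv₁
      have := hid₁.add_atBot (tendsto_neg_atTop_atBot.comp hq)
      simpa only [Function.comp_def, ← modNewton_eq] using this
    · have hnum : Tendsto (fun x => f x + f (newtonFun f x)) l₂ atBot :=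
        hf₂.add_atBot (hbot.comp hN₂)
      have hq : Tendsto (fun x => (f x + f (newtonFun f x)) * (deriv f x)⁻¹) l₂ atBot :=
        hnum.atBot_mul_atTop₀ hinv₂
      have := hid₂.add_atTop (tendsto_neg_atBot_atTop.comp hq)
      simpa only [Function.comp_def, ← modNewton_eq] using this
  · -- f → −∞ at +∞ : M → atTop at c₁⁺, atBot at c₂⁻
    left
    constructor
    · have hnum : Tendsto (fun x => f x + f (newtonFun f x)) l₁ atBot :=
        hf₁.add_atBot (htop.comp hN₁)
      have hq : Tendsto (fun x => (f x + f (newtonFun f x)) * (deriv f x)⁻¹) l₁ atBot :=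
        hnum.atBot_mul_atTop₀ hinv₁
      have := hid₁.add_atTop (tendsto_neg_atBot_atTop.comp hq)
      simpa only [Function.comp_def, ← modNewton_eq] using this
    · have hnum : Tendsto (fun x => f x + f (newtonFun f x)) l₂ atTop :=
        hf₂.add_atTop (hbot.comp hN₂)
      have hq : Tendsto (fun x => (f x + f (newtonFun f x)) * (deriv f x)⁻¹) l₂ atTop :=
        hnum.atTop_mul_atTop₀ hinv₂
      have := hid₂.add_atBot (tendsto_neg_atTop_atBot.comp hq)
      simpa only [Function.comp_def, ← modNewton_eq] using this

/-- If `f` is a Newton-class function with infinite limits of opposite signs at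
`±∞`, and `c₁ < c₂` are consecutive roots of `f'` with exactly one root of `f`
in `(c₁, c₂)`, then the one-sided limits of `M_f` at `c₁+` and `c₂−` are
infinite with opposite signs. -/
theorem modNewtonFun_onesided_limits_infinite
    (f : ℝ → ℝ) (hf : NewtonClass f)
    (hlim : (Filter.Tendsto f Filter.atTop Filter.atTop ∧
              Filter.Tendsto f Filter.atBot Filter.atBot) ∨
            (Filter.Tendsto f Filter.atTop Filter.atBot ∧
              Filter.Tendsto f Filter.atBot Filter.atTop))
    (c₁ c₂ : ℝ) (hlt : c₁ < c₂)
    (hc₁ : deriv f c₁ = 0) (hc₂ : deriv f c₂ = 0)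
    (hconsec : ∀ x ∈ Set.Ioo c₁ c₂, deriv f x ≠ 0)
    (hroot : ∃! r, r ∈ Set.Ioo c₁ c₂ ∧ f r = 0) :
    (Filter.Tendsto (modNewtonFun f) (nhdsWithin c₁ (Set.Ioi c₁)) Filter.atTop ∧
       Filter.Tendsto (modNewtonFun f) (nhdsWithin c₂ (Set.Iio c₂)) Filter.atBot) ∨
    (Filter.Tendsto (modNewtonFun f) (nhdsWithin c₁ (Set.Ioi c₁)) Filter.atBot ∧
       Filter.Tendsto (modNewtonFun f) (nhdsWithin c₂ (Set.Iio c₂)) Filter.atTop) := by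
  have hC : Continuous f := hf.1.continuous
  have hC' : Continuous (deriv f) := hf.1.continuous_deriv one_le_two
  obtain ⟨r, ⟨hr, hfr⟩, -⟩ := hroot
  -- `f'` has constant sign on the open interval
  have hsign : (∀ x ∈ Set.Ioo c₁ c₂, 0 < deriv f x) ∨
      (∀ x ∈ Set.Ioo c₁ c₂, deriv f x < 0) := by
    by_contra h
    push_neg at h
    obtain ⟨⟨a, ha, ha'⟩, ⟨b, hb, hb'⟩⟩ := h
    have hda : deriv f a < 0 := lt_of_le_of_ne ha' (hconsec a ha)
    have hdb : 0 < deriv f b := hb'.lt_of_ne' (hconsec b hb)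
    have h0 : (0:ℝ) ∈ Set.uIcc (deriv f a) (deriv f b) :=
      Set.mem_uIcc.2 (Or.inl ⟨hda.le, hdb.le⟩)
    obtain ⟨z, hz, hz0⟩ := intermediate_value_uIcc (hC'.continuousOn) h0
    exact hconsec z (Set.ordConnected_Ioo.uIcc_subset ha hb hz) hz0
  rcases hsign with hpos | hneg
  · exact modNewton_main_pos f hC hC' hlim c₁ c₂ r hlt hc₁ hc₂ hpos hr hfr
  · -- apply the positive case to `-f`
    have hdg : deriv (fun x => -f x) = fun x => -deriv f x := by
      funext x; exact deriv.neg
    have hCg : Continuous (fun x => -f x) := hC.neg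
    have hCg' : Continuous (deriv fun x => -f x) := by
      rw [hdg]; exact hC'.neg
    have hlimg : (Tendsto (fun x => -f x) atTop atTop ∧
          Tendsto (fun x => -f x) atBot atBot) ∨
        (Tendsto (fun x => -f x) atTop atBot ∧
          Tendsto (fun x => -f x) atBot atTop) := by
      rcases hlim with ⟨h1, h2⟩ | ⟨h1, h2⟩
      · exact Or.inr ⟨tendsto_neg_atTop_atBot.comp h1, tendsto_neg_atBot_atTop.comp h2⟩
      · exact Or.inl ⟨tendsto_neg_atBot_atTop.comp h1, tendsto_neg_atTop_atBot.comp h2⟩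
    have hposg : ∀ x ∈ Set.Ioo c₁ c₂, 0 < deriv (fun x => -f x) x := by
      intro x hx; rw [hdg]; simpa using hneg x hx
    have h := modNewton_main_pos (fun x => -f x) hCg hCg' hlimg c₁ c₂ r hlt
      (by rw [hdg]; simp [hc₁]) (by rw [hdg]; simp [hc₂]) hposg hr (by simp [hfr])
    rwa [modNewton_neg] at h
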